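/- The domination bound (m-1)!·(n-1)! is tight: let q(i,j,k,ℓ) = 1 if (i,j,k,ℓ) = (i',j',k',ℓ') for a fixed quadruple, and 0 otherwise, with c = 0 and d = 0. Then the average objective value is A = 1/(mn), and the number of permutation pairs (σ,π) with f(σ,π) ≥ A is exactly (m-1)!·(n-1)! (namely those with σ(i') = j' and π(k') = ℓ'). -/

import Mathlib

open scoped Classical

lemma card_fix_zero (N : ℕ) :
    (Finset.univ.filter (fun σ : Equiv.Perm (Fin (N+1)) => σ 0 = 0)).card
      = Nat.factorial N := by
  have h : ∀ σ : Equiv.Perm (Fin (N+1)), σ 0 = 0 ↔ (Equiv.Perm.decomposeFin σ).1 = 0 := by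
    intro σ
    conv_lhs => rw [← Equiv.Perm.decomposeFin.symm_apply_apply σ,
      show Equiv.Perm.decomposeFin.symm (Equiv.Perm.decomposeFin σ)
        = Equiv.Perm.decomposeFin.symm ((Equiv.Perm.decomposeFin σ).1, (Equiv.Perm.decomposeFin σ).2) from rfl,
      Equiv.Perm.decomposeFin_symm_apply_zero]
  have e1 : {σ : Equiv.Perm (Fin (N+1)) // σ 0 = 0} ≃ {x : Fin (N+1) × Equiv.Perm (Fin N) // x.1 = 0} :=
    Equiv.Perm.decomposeFin.subtypeEquiv h
  have e2 : {x : Fin (N+1) × Equiv.Perm (Fin N) // x.1 = 0} ≃ Equiv.Perm (Fin N) :=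
    ⟨fun x => x.1.2, fun e => ⟨(0, e), rfl⟩,
     fun x => by rcases x with ⟨⟨p, e⟩, hp⟩; simp only at hp; subst hp; rfl,
     fun e => rfl⟩
  calc (Finset.univ.filter (fun σ : Equiv.Perm (Fin (N+1)) => σ 0 = 0)).card
      = Fintype.card {σ : Equiv.Perm (Fin (N+1)) // σ 0 = 0} := (Fintype.card_subtype _).symm
    _ = Fintype.card (Equiv.Perm (Fin N)) := Fintype.card_congr (e1.trans e2)
    _ = Nat.factorial N := by simp [Fintype.card_perm]

lemma card_fix (N : ℕ) (hN : 0 < N) (a b : Fin N) :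
    (Finset.univ.filter (fun σ : Equiv.Perm (Fin N) => σ a = b)).card
      = Nat.factorial (N - 1) := by
  obtain ⟨M, rfl⟩ : ∃ M, N = M + 1 := ⟨N - 1, by omega⟩
  have key : (Finset.univ.filter (fun σ : Equiv.Perm (Fin (M+1)) => σ a = b)).card
      = (Finset.univ.filter (fun σ : Equiv.Perm (Fin (M+1)) => σ 0 = 0)).card := by
    apply Finset.card_nbij' (fun σ => Equiv.swap 0 b * σ * Equiv.swap a 0)
      (fun σ => Equiv.swap 0 b * σ * Equiv.swap a 0)
    · intro σ hσ
      simp only [Finset.mem_coe, Finset.mem_filter, Finset.mem_univ, true_and] at *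
      simp [Equiv.Perm.mul_apply, hσ]
    · intro σ hσ
      simp only [Finset.mem_coe, Finset.mem_filter, Finset.mem_univ, true_and] at *
      simp [Equiv.Perm.mul_apply, hσ, Equiv.swap_apply_left]
    · intro σ _; ext x; simp [Equiv.Perm.mul_apply, Equiv.swap_comm]
    · intro σ _; ext x; simp [Equiv.Perm.mul_apply, Equiv.swap_comm]
  simp [key, card_fix_zero]

theorem stmt_18 (m n : ℕ) (hm : 0 < m) (hn : 0 < n)
    (i' j' : Fin m) (k' l' : Fin n)
    (q : Fin m → Fin m → Fin n → Fin n → ℝ)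
    (hq : ∀ i j k l, q i j k l =
      if i = i' ∧ j = j' ∧ k = k' ∧ l = l' then 1 else 0)
    (f : Equiv.Perm (Fin m) → Equiv.Perm (Fin n) → ℝ)
    (hf : ∀ σ π, f σ π = ∑ i, ∑ k, q i (σ i) k (π k))
    (A : ℝ)
    (hA : A = (∑ σ : Equiv.Perm (Fin m), ∑ π : Equiv.Perm (Fin n), f σ π)
        / ((Nat.factorial m * Nat.factorial n : ℕ) : ℝ)) :
    A = 1 / ((m * n : ℕ) : ℝ)
    ∧ (Finset.univ.filter
        (fun p : Equiv.Perm (Fin m) × Equiv.Perm (Fin n) => A ≤ f p.1 p.2)).card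
      = Nat.factorial (m - 1) * Nat.factorial (n - 1)
    ∧ (Finset.univ.filter
        (fun p : Equiv.Perm (Fin m) × Equiv.Perm (Fin n) => A ≤ f p.1 p.2))
      = (Finset.univ.filter
        (fun p : Equiv.Perm (Fin m) × Equiv.Perm (Fin n) =>
          p.1 i' = j' ∧ p.2 k' = l')) := by
  have split_ite : ∀ (P Q : Prop) [Decidable P] [Decidable Q],
      (if P ∧ Q then (1:ℝ) else 0) = (if P then (1:ℝ) else 0) * (if Q then (1:ℝ) else 0) := by
    intro P Q _ _
    by_cases hP : P <;> by_cases hQ : Q <;> simp [hP, hQ]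
  have hf' : ∀ σ π, f σ π = if σ i' = j' ∧ π k' = l' then 1 else 0 := by
    intro σ π
    rw [hf]
    simp only [hq]
    have key : ∀ i k, (if i = i' ∧ σ i = j' ∧ k = k' ∧ π k = l' then (1:ℝ) else 0)
        = (if i = i' ∧ σ i = j' then (1:ℝ) else 0) * (if k = k' ∧ π k = l' then (1:ℝ) else 0) := by
      intro i k
      rw [if_congr (show (i = i' ∧ σ i = j' ∧ k = k' ∧ π k = l') ↔
        ((i = i' ∧ σ i = j') ∧ (k = k' ∧ π k = l')) from by tauto) rfl rfl, split_ite]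
    simp only [key, ← Finset.mul_sum, ← Finset.sum_mul]
    have s1 : ∑ i, (if i = i' ∧ σ i = j' then (1:ℝ) else 0) = if σ i' = j' then 1 else 0 := by
      simp [ite_and]
    have s2 : ∑ k, (if k = k' ∧ π k = l' then (1:ℝ) else 0) = if π k' = l' then 1 else 0 := by
      simp [ite_and]
    rw [s1, s2, ← split_ite]
  have hsum : (∑ σ : Equiv.Perm (Fin m), ∑ π : Equiv.Perm (Fin n), f σ π)
      = ((Nat.factorial (m - 1) * Nat.factorial (n - 1) : ℕ) : ℝ) := by
    simp only [hf', split_ite]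
    rw [← Finset.sum_mul_sum]
    rw [Finset.sum_boole, Finset.sum_boole]
    rw [card_fix m hm i' j', card_fix n hn k' l']
    push_cast
    ring
  have hA' : A = 1 / ((m * n : ℕ) : ℝ) := by
    rw [hA, hsum]
    have h1 : m.factorial = m * (m-1).factorial := (Nat.mul_factorial_pred hm.ne').symm
    have h2 : n.factorial = n * (n-1).factorial := (Nat.mul_factorial_pred hn.ne').symm
    rw [h1, h2]
    have pm : ((m-1).factorial : ℝ) ≠ 0 := by positivity
    have pn : ((n-1).factorial : ℝ) ≠ 0 := by positivity
    have pm' : (m : ℝ) ≠ 0 := by positivity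
    have pn' : (n : ℝ) ≠ 0 := by positivity
    push_cast
    field_simp
  have hAle : ∀ (P : Prop) [Decidable P], (A ≤ if P then (1:ℝ) else 0) ↔ P := by
    intro P _
    have hpos : (0:ℝ) < A := by
      rw [hA']
      have : (0:ℝ) < ((m*n : ℕ):ℝ) := by positivity
      positivity
    have hle1 : A ≤ 1 := by
      rw [hA']
      rw [div_le_one (by positivity)]
      exact_mod_cast Nat.one_le_iff_ne_zero.mpr (by positivity)
    by_cases hP : P
    · simp [hP, hle1]
    · simp [hP]
      exact hpos
  have hset : (Finset.univ.filter
        (fun p : Equiv.Perm (Fin m) × Equiv.Perm (Fin n) => A ≤ f p.1 p.2))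
      = (Finset.univ.filter
        (fun p : Equiv.Perm (Fin m) × Equiv.Perm (Fin n) =>
          p.1 i' = j' ∧ p.2 k' = l')) := by
    apply Finset.filter_congr
    intro p _
    rw [hf' p.1 p.2]
    exact hAle _
  refine ⟨hA', ?_, hset⟩
  rw [hset]
  have hprod : (Finset.univ.filter (fun p : Equiv.Perm (Fin m) × Equiv.Perm (Fin n) =>
        p.1 i' = j' ∧ p.2 k' = l'))
      = (Finset.univ.filter (fun σ : Equiv.Perm (Fin m) => σ i' = j')) ×ˢ
        (Finset.univ.filter (fun π : Equiv.Perm (Fin n) => π k' = l')) := by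
    ext ⟨σ, π⟩
    simp
  rw [hprod, Finset.card_product, card_fix m hm i' j', card_fix n hn k' l']
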